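/- arXiv:2506.17905 — 2 statements merged into one kernel-verified Lean document; each statement's English description precedes it below -/
import Mathlib

section
/- Let 𝒬 be a stopping collection with top Q in a dyadic lattice of ℝ^n, let 1 ≤ q ≤ p < ∞ and λ > 1. Let f ∈ Ẋ_q(𝒬) with ‖f‖_{Ẋ_q} ≤ 1, write f_{>λ} = f·1_{|f|>λ}, and define b = Σ_{L∈𝒬} (f_{>λ} − |L|^{−1}∫_L f_{>λ}) 1_L and g = f − b. Then ‖b‖_{Ẋ_1(𝒬)} ≲ λ^{1−q} and ‖g‖_{𝒴_p(𝒬)} ≲ λ^{1−q/p}, with implicit constants depending only on n, q, p. -/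
open MeasureTheory Filter Set
open scoped ENNReal NNReal BigOperators FourierTransform

noncomputable section

/-- View a vector in the Pi type `Fin n → ℝ` as an element of Euclidean space. -/
def toE {n : ℕ} (x : Fin n → ℝ) : EuclideanSpace ℝ (Fin n) :=
  (WithLp.equiv 2 (Fin n → ℝ)).symm x

/-- The Euclidean norm of a vector in `Fin n → ℝ`. -/
def eunorm {n : ℕ} (x : Fin n → ℝ) : ℝ := ‖toE x‖

/-- An axis-parallel (half-open) cube in `ℝⁿ`, given by its center and (positive) side length. -/
structure Cube (n : ℕ) where
  center : Fin n → ℝ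
  side : ℝ
  side_pos : 0 < side

namespace Cube

/-- The set of points of a cube. -/
def toSet {n : ℕ} (Q : Cube n) : Set (Fin n → ℝ) :=
  {x | ∀ i, Q.center i - Q.side / 2 ≤ x i ∧ x i < Q.center i + Q.side / 2}

/-- The `lam`-fold dilate of a cube (same center, `lam` times the side length). -/
def dilate {n : ℕ} (Q : Cube n) (lam : ℝ) (h : 0 < lam) : Cube n :=
  ⟨Q.center, lam * Q.side, mul_pos h Q.side_pos⟩

end Cube

/-- `(|Q|⁻¹ ∫_Q ‖f‖^q)^(1/q)`, the `L^q` average of `f` over `Q`, valued in `ℝ≥0∞`. -/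
def cubeAvg {n : ℕ} (q : ℝ) (Q : Set (Fin n → ℝ)) {E : Type*} [NormedAddCommGroup E]
    (f : (Fin n → ℝ) → E) : ℝ≥0∞ :=
  ((volume Q)⁻¹ * ∫⁻ x in Q, (‖f x‖₊ : ℝ≥0∞) ^ q) ^ (1 / q)

/-- An `η`-sparse family of cubes. -/
def IsSparseFamily {n : ℕ} (η : ℝ) (S : Set (Cube n)) : Prop :=
  ∃ E : Cube n → Set (Fin n → ℝ),
    (∀ Q ∈ S, E Q ⊆ Q.toSet ∧ MeasurableSet (E Q) ∧
      ENNReal.ofReal η * volume Q.toSet ≤ volume (E Q)) ∧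
    S.Pairwise fun Q Q' => Disjoint (E Q) (E Q')

/-- The positive sparse form `PSF_{S;q₁,…,q_m}(f₁,…,f_m) = ∑_{Q∈S} |Q| ∏ᵢ ⟨fᵢ⟩_{qᵢ,Q}`. -/
def PSF {n m : ℕ} (S : Set (Cube n)) (q : Fin m → ℝ) {E : Type*} [NormedAddCommGroup E]
    (f : Fin m → (Fin n → ℝ) → E) : ℝ≥0∞ :=
  ∑' Q : S, volume (Q : Cube n).toSet * ∏ i, cubeAvg (q i) (Q : Cube n).toSet (f i)

/-- Surface measure on the unit sphere `𝕊^{d-1} ⊆ ℝ^d`, realized as a measure on `ℝ^d`: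
`σ(A) = d · |{x : ‖x‖ ≤ 1, x ≠ 0, x/‖x‖ ∈ A}|`. -/
def sphereMeasure (d : ℕ) : Measure (EuclideanSpace ℝ (Fin d)) :=
  (d : ℝ≥0∞) • Measure.map (fun x => ‖x‖⁻¹ • x) (volume.restrict {x | ‖x‖ ≤ 1 ∧ x ≠ 0})

/-- The rough kernel `K(x) = Ω(x/|x|)|x|^{-mn}` on `ℝ^{mn}`. -/
def roughKernel (m n : ℕ) (Ω : EuclideanSpace ℝ (Fin (m * n)) → ℝ)
    (x : EuclideanSpace ℝ (Fin (m * n))) : ℝ :=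
  Ω (‖x‖⁻¹ • x) * ‖x‖ ^ (-(m * n : ℝ))

/-- Pack an `m`-tuple of vectors in `ℝⁿ` into a single vector in `ℝ^{mn}`. -/
def pack (m n : ℕ) (v : Fin m → Fin n → ℝ) : EuclideanSpace ℝ (Fin (m * n)) :=
  (WithLp.equiv 2 (Fin (m * n) → ℝ)).symm fun k =>
    v (finProdFinEquiv.symm k).1 (finProdFinEquiv.symm k).2

/-- The rough multilinear singular integral `𝒯_Ω`, defined as a principal value. -/
def TOmega (m n : ℕ) (Ω : EuclideanSpace ℝ (Fin (m * n)) → ℝ)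
    (f : Fin m → (Fin n → ℝ) → ℝ) (x : Fin n → ℝ) : ℝ :=
  limUnder (nhdsWithin 0 (Set.Ioi (0 : ℝ))) fun ε =>
    ∫ y : Fin m → Fin n → ℝ in {y | ∀ i, ε < eunorm (x - y i)},
      roughKernel m n Ω (pack m n fun i => x - y i) * ∏ i, f i (y i)

/-- The commutator `[𝒯_Ω, 𝐛]_α` of the rough multilinear singular integral with BMO symbols. -/
def TOmegaComm (m n : ℕ) (Ω : EuclideanSpace ℝ (Fin (m * n)) → ℝ)
    (b : Fin m → (Fin n → ℝ) → ℝ) (α : Fin m → ℕ)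
    (f : Fin m → (Fin n → ℝ) → ℝ) (x : Fin n → ℝ) : ℝ :=
  limUnder (nhdsWithin 0 (Set.Ioi (0 : ℝ))) fun ε =>
    ∫ y : Fin m → Fin n → ℝ in {y | ∀ i, ε < eunorm (x - y i)},
      roughKernel m n Ω (pack m n fun i => x - y i) *
        (∏ i, (b i x - b i (y i)) ^ α i) * ∏ i, f i (y i)

/-- Weighted `L^t` norm: `‖f‖_{L^t(w)} = (∫ |f|^t w)^{1/t}`, valued in `ℝ≥0∞`. -/
def wnorm {n : ℕ} (t : ℝ) (w : (Fin n → ℝ) → ℝ) (f : (Fin n → ℝ) → ℝ) : ℝ≥0∞ :=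
  (∫⁻ x, (‖f x‖₊ : ℝ≥0∞) ^ t * ENNReal.ofReal (w x)) ^ (1 / t)

/-- The condition `(1/p₁,…,1/p_m) ∈ ℋ^m(r)`:
for every `α ∈ {0,1}^m`, `1/p_α + (|α|-1)/r < |α|`. -/
def memH (m : ℕ) (r : ℝ) (p : Fin m → ℝ) : Prop :=
  ∀ S : Finset (Fin m), (∑ i ∈ S, (p i)⁻¹) + ((S.card : ℝ) - 1) / r < S.card

/-- The average `|Q|⁻¹ ∫_Q g` of a real function over a cube. -/
def avgI {n : ℕ} (Q : Cube n) (g : (Fin n → ℝ) → ℝ) : ℝ :=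
  ((volume Q.toSet).toReal)⁻¹ * ∫ x in Q.toSet, g x

/-- The `A_{𝐩,𝐫}` quantity of a weight vector on a fixed cube `Q`. -/
def AprQ {n m : ℕ} (p : Fin m → ℝ) (r : Fin (m + 1) → ℝ)
    (w : Fin m → (Fin n → ℝ) → ℝ) (Q : Cube n) : ℝ :=
  (avgI Q fun x => (∏ i, w i x ^ ((∑ j, (p j)⁻¹)⁻¹ / p i)) ^
      ((r (Fin.last m) / (r (Fin.last m) - 1)) /
        (r (Fin.last m) / (r (Fin.last m) - 1) - (∑ j, (p j)⁻¹)⁻¹))) ^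
      ((∑ j, (p j)⁻¹) - (r (Fin.last m) / (r (Fin.last m) - 1))⁻¹) *
    ∏ i, (avgI Q fun x => w i x ^ (-(p i / r i.castSucc - 1)⁻¹)) ^
      ((r i.castSucc)⁻¹ - (p i)⁻¹)

/-- Membership in the multilinear weight class `A_{𝐩,𝐫}`. -/
def MemApr {n m : ℕ} (p : Fin m → ℝ) (r : Fin (m + 1) → ℝ)
    (w : Fin m → (Fin n → ℝ) → ℝ) : Prop :=
  (∀ i x, 0 < w i x) ∧ (∀ i, LocallyIntegrable (w i) volume) ∧
    BddAbove (Set.range (AprQ p r w))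

/-- The `A_{𝐩,𝐫}` characteristic `[𝐰]_{A_{𝐩,𝐫}}` (supremum over all cubes). -/
def AprConst {n m : ℕ} (p : Fin m → ℝ) (r : Fin (m + 1) → ℝ)
    (w : Fin m → (Fin n → ℝ) → ℝ) : ℝ :=
  ⨆ Q : Cube n, AprQ p r w Q

/-- Membership in the Muckenhoupt class `A_t`. -/
def MemAp {n : ℕ} (t : ℝ) (w : (Fin n → ℝ) → ℝ) : Prop :=
  (∀ x, 0 ≤ w x) ∧ LocallyIntegrable w volume ∧
    ∃ C : ℝ, ∀ Q : Cube n,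
      avgI Q w * (avgI Q fun x => w x ^ (1 / (1 - t))) ^ (t - 1) ≤ C

/-- The BMO oscillation of `b` on a cube `Q`. -/
def bmoQ {n : ℕ} (b : (Fin n → ℝ) → ℝ) (Q : Cube n) : ℝ :=
  avgI Q fun x => |b x - avgI Q b|

/-- Membership in BMO. -/
def MemBMO {n : ℕ} (b : (Fin n → ℝ) → ℝ) : Prop :=
  LocallyIntegrable b volume ∧ BddAbove (Set.range (bmoQ b))

/-- The BMO norm. -/
def bmoNorm {n : ℕ} (b : (Fin n → ℝ) → ℝ) : ℝ :=
  ⨆ Q : Cube n, bmoQ b Q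

/-- A dyadic lattice of cubes in `ℝⁿ` (a translate of the standard dyadic grid). -/
def IsDyadicLattice {n : ℕ} (D : Set (Cube n)) : Prop :=
  ∃ c : Fin n → ℝ, D = {Q : Cube n | ∃ (k : ℤ) (a : Fin n → ℤ),
    Q.side = 2 ^ k ∧ ∀ i, Q.center i = c i + ((a i : ℝ) + 1 / 2) * 2 ^ k}

/-- The shadow `sh𝒬 = ⋃_{L ∈ 𝒬} L` of a collection of cubes. -/
def shadow {n : ℕ} (Qc : Set (Cube n)) : Set (Fin n → ℝ) :=
  ⋃ L ∈ Qc, L.toSet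

/-- A stopping collection `𝒬` with top cube `Q` inside the dyadic lattice `D`. -/
def IsStoppingCollection {n : ℕ} (D : Set (Cube n)) (Qtop : Cube n)
    (Qc : Set (Cube n)) : Prop :=
  Qtop ∈ D ∧ Qc ⊆ D ∧
    (∀ L ∈ Qc, ∀ L' ∈ Qc, (Cube.toSet L ∩ Cube.toSet L').Nonempty → L = L') ∧
    (∀ L ∈ Qc, Cube.toSet L ⊆ (Qtop.dilate 3 (by norm_num)).toSet) ∧
    (∀ L ∈ Qc, ∀ L' ∈ Qc, 8 ≤ |Real.logb 2 L.side - Real.logb 2 L'.side| →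
      Disjoint (L.dilate 7 (by norm_num)).toSet (L'.dilate 7 (by norm_num)).toSet) ∧
    (⋃ L ∈ {L ∈ Qc | ((L.dilate 3 (by norm_num)).toSet ∩
        (Qtop.dilate 2 (by norm_num)).toSet).Nonempty},
      (Cube.dilate L 9 (by norm_num)).toSet) ⊆ shadow Qc

/-- The maximal function `M_t h(x) = sup_{Q ∋ x} ⟨h⟩_{t,Q}`, valued in `ℝ≥0∞`. -/
def maxFn {n : ℕ} (t : ℝ) {E : Type*} [NormedAddCommGroup E]
    (h : (Fin n → ℝ) → E) (x : Fin n → ℝ) : ℝ≥0∞ :=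
  ⨆ (Q : Cube n) (_ : x ∈ Q.toSet), cubeAvg t Q.toSet h

/-- The `𝒴_t(𝒬)` norm. -/
def Ynorm {n : ℕ} (Qc : Set (Cube n)) (t : ℝ) {E : Type*} [NormedAddCommGroup E]
    (h : (Fin n → ℝ) → E) : ℝ≥0∞ :=
  max (eLpNorm (Set.indicator (shadow Qc)ᶜ h) ⊤ volume)
    (⨆ (L : Cube n) (_ : L ∈ Qc), ⨅ x ∈ (L.dilate 32 (by norm_num)).toSet, maxFn t h x)

/-- Membership in `𝒴_t(𝒬)` (with top cube `Qtop`). -/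
def MemY {n : ℕ} (Qc : Set (Cube n)) (Qtop : Cube n) (t : ℝ) {E : Type*}
    [NormedAddCommGroup E] (h : (Fin n → ℝ) → E) : Prop :=
  MemLp h (ENNReal.ofReal t) volume ∧
    Function.support h ⊆ (Qtop.dilate 3 (by norm_num)).toSet ∧ Ynorm Qc t h < ⊤

/-- Membership in `Ẋ_t(𝒬)`: a function of `𝒴_t(𝒬)` supported on the shadow of `𝒬`
with vanishing mean on every cube of `𝒬`. -/
def MemXdot {n : ℕ} (Qc : Set (Cube n)) (Qtop : Cube n) (t : ℝ)
    (h : (Fin n → ℝ) → ℝ) : Prop :=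
  MemY Qc Qtop t h ∧ Function.support h ⊆ shadow Qc ∧
    ∀ L ∈ Qc, ∫ x in Cube.toSet L, h x = 0

section CZAux

variable {n : ℕ}

lemma cube_volume (Q : Cube n) : volume Q.toSet = ENNReal.ofReal (Q.side ^ n) := by
  have hset : Q.toSet = Set.univ.pi fun i =>
      Set.Ico (Q.center i - Q.side / 2) (Q.center i + Q.side / 2) := by
    ext x; simp [Cube.toSet, Set.mem_univ_pi]
  have hlen : ∀ i : Fin n, (Q.center i + Q.side / 2) - (Q.center i - Q.side / 2) = Q.side := by
    intro i; ring
  rw [hset, volume_pi_pi]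
  simp only [Real.volume_Ico, hlen]
  rw [Finset.prod_const, ← ENNReal.ofReal_pow Q.side_pos.le]
  simp

lemma cube_vol_ne_zero (Q : Cube n) : volume Q.toSet ≠ 0 := by
  rw [cube_volume]
  simp only [ne_eq, ENNReal.ofReal_eq_zero, not_le]
  have := Q.side_pos
  positivity

lemma cube_vol_ne_top (Q : Cube n) : volume Q.toSet ≠ ⊤ := by
  rw [cube_volume]; exact ENNReal.ofReal_ne_top

lemma subset_dilate (L : Cube n) {lam : ℝ} (h1 : 1 ≤ lam) (h : 0 < lam) :
    L.toSet ⊆ (L.dilate lam h).toSet := by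
  intro x hx i
  obtain ⟨h1i, h2i⟩ := hx i
  have hs := L.side_pos
  constructor
  · simp only [Cube.dilate]
    nlinarith
  · simp only [Cube.dilate]
    nlinarith

lemma cubeAvg_le_maxFn {t : ℝ} {f : (Fin n → ℝ) → ℝ} {x : Fin n → ℝ} {Q : Cube n}
    (hx : x ∈ Q.toSet) : cubeAvg t Q.toSet f ≤ maxFn t f x :=
  le_iSup_of_le Q (le_iSup_of_le hx le_rfl)

lemma cubeAvg_rpow {t : ℝ} (ht : 0 < t) (S : Set (Fin n → ℝ)) (f : (Fin n → ℝ) → ℝ) :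
    cubeAvg t S f ^ t = (volume S)⁻¹ * ∫⁻ x in S, (‖f x‖₊ : ℝ≥0∞) ^ t := by
  rw [cubeAvg, ← ENNReal.rpow_mul, one_div, inv_mul_cancel₀ ht.ne', ENNReal.rpow_one]

lemma two_rpow_eq (t : ℝ) : ((2 : ℝ≥0∞)) ^ t = ENNReal.ofReal (2 ^ t) := by
  rw [← ENNReal.ofReal_ofNat 2, ← ENNReal.ofReal_rpow_of_pos (by norm_num)]

lemma exists_good_point {Qc : Set (Cube n)} {t : ℝ} {f : (Fin n → ℝ) → ℝ}
    (hY : Ynorm Qc t f ≤ 1) {L : Cube n} (hL : L ∈ Qc) :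
    ∃ x ∈ (L.dilate 32 (by norm_num)).toSet, maxFn t f x < 2 := by
  have h1 : (⨅ x ∈ (L.dilate 32 (by norm_num)).toSet, maxFn t f x) ≤ 1 := by
    refine le_trans ?_ ((le_max_right _ _).trans hY)
    exact le_iSup₂ (f := fun (L : Cube n) (_ : L ∈ Qc) =>
      ⨅ x ∈ (L.dilate 32 (by norm_num)).toSet, maxFn t f x) L hL
  have h2 : (⨅ x ∈ (L.dilate 32 (by norm_num)).toSet, maxFn t f x) < 2 :=
    h1.trans_lt ENNReal.one_lt_two
  rw [iInf_lt_iff] at h2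
  obtain ⟨x, hx⟩ := h2
  rw [iInf_lt_iff] at hx
  obtain ⟨hxm, hx⟩ := hx
  exact ⟨x, hxm, hx⟩

lemma lint_le_of_maxFn_lt {t : ℝ} (ht : 0 < t) {f : (Fin n → ℝ) → ℝ} {x₀ : Fin n → ℝ}
    (hM : maxFn t f x₀ < 2) {Q : Cube n} (hx : x₀ ∈ Q.toSet) :
    ∫⁻ x in Q.toSet, (‖f x‖₊ : ℝ≥0∞) ^ t ≤ volume Q.toSet * 2 ^ t := by
  have h1 : cubeAvg t Q.toSet f ≤ 2 := ((cubeAvg_le_maxFn hx).trans_lt hM).le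
  have h2 : cubeAvg t Q.toSet f ^ t ≤ (2 : ℝ≥0∞) ^ t := ENNReal.rpow_le_rpow h1 ht.le
  rw [cubeAvg_rpow ht] at h2
  calc ∫⁻ x in Q.toSet, (‖f x‖₊ : ℝ≥0∞) ^ t
      = volume Q.toSet * ((volume Q.toSet)⁻¹ * ∫⁻ x in Q.toSet, (‖f x‖₊ : ℝ≥0∞) ^ t) := by
        rw [← mul_assoc, ENNReal.mul_inv_cancel (cube_vol_ne_zero Q) (cube_vol_ne_top Q), one_mul]
    _ ≤ volume Q.toSet * 2 ^ t := by gcongr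

lemma cutoff_abs_le {q lam : ℝ} (hq : 1 ≤ q) (hlam : 1 < lam) (v : ℝ) :
    |if lam < |v| then v else 0| ≤ lam ^ (1 - q) * |v| ^ q := by
  split_ifs with h
  · have hlam0 : (0 : ℝ) < lam := by linarith
    have hv0 : (0 : ℝ) < |v| := lt_trans hlam0 h
    have h2 : |v| ^ (1 - q) ≤ lam ^ (1 - q) :=
      Real.rpow_le_rpow_of_nonpos hlam0 h.le (by linarith)
    calc |v| = |v| ^ (1 - q) * |v| ^ q := by rw [← Real.rpow_add hv0]; norm_num
      _ ≤ lam ^ (1 - q) * |v| ^ q :=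
          mul_le_mul_of_nonneg_right h2 (Real.rpow_nonneg (abs_nonneg v) q)
  · simp only [abs_zero]
    positivity

lemma cutoff_enorm_le {q lam : ℝ} (hq : 1 ≤ q) (hlam : 1 < lam) (v : ℝ) :
    (‖if lam < |v| then v else 0‖₊ : ℝ≥0∞) ≤
      ENNReal.ofReal (lam ^ (1 - q)) * (‖v‖₊ : ℝ≥0∞) ^ q := by
  rw [← enorm_eq_nnnorm, ← ofReal_norm, ← enorm_eq_nnnorm, ← ofReal_norm,
    ENNReal.ofReal_rpow_of_nonneg (norm_nonneg _) (by linarith),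
    ← ENNReal.ofReal_mul (by positivity)]
  refine ENNReal.ofReal_le_ofReal ?_
  simpa [Real.norm_eq_abs] using cutoff_abs_le hq hlam v

lemma ennreal_add_rpow_le (a b : ℝ≥0∞) {t : ℝ} (ht : 0 ≤ t) :
    (a + b) ^ t ≤ 2 ^ t * (a ^ t + b ^ t) := by
  have h1 : a + b ≤ 2 * max a b := by
    rw [two_mul]
    exact add_le_add (le_max_left a b) (le_max_right a b)
  calc (a + b) ^ t ≤ (2 * max a b) ^ t := ENNReal.rpow_le_rpow h1 ht
    _ = 2 ^ t * (max a b) ^ t := ENNReal.mul_rpow_of_nonneg _ _ ht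
    _ ≤ 2 ^ t * (a ^ t + b ^ t) := by
        gcongr
        rcases le_total a b with h | h
        · rw [max_eq_right h]; exact le_add_self
        · rw [max_eq_left h]; exact le_self_add

lemma mem_shadow_iff {Qc : Set (Cube n)} {x : Fin n → ℝ} :
    x ∈ shadow Qc ↔ ∃ L ∈ Qc, x ∈ L.toSet := by
  simp [shadow]

end CZAux

section CZAux2

variable {n : ℕ}

lemma tsum_indicator_of_mem {Qc : Set (Cube n)}
    (hdisj : ∀ L ∈ Qc, ∀ L' ∈ Qc, (Cube.toSet L ∩ Cube.toSet L').Nonempty → L = L')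
    (ψ : Qc → (Fin n → ℝ) → ℝ) {x : Fin n → ℝ} {L₀ : Cube n} (h₀ : L₀ ∈ Qc)
    (hx : x ∈ L₀.toSet) :
    ∑' L : Qc, Set.indicator (Cube.toSet (L : Cube n)) (ψ L) x = ψ ⟨L₀, h₀⟩ x := by
  rw [tsum_eq_single (⟨L₀, h₀⟩ : Qc)]
  · exact Set.indicator_of_mem hx _
  · intro L hne
    refine Set.indicator_of_notMem (fun hxL => hne ?_) _
    exact Subtype.ext (hdisj _ L.2 _ h₀ ⟨x, hxL, hx⟩)

lemma tsum_indicator_of_not_mem {Qc : Set (Cube n)}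
    (ψ : Qc → (Fin n → ℝ) → ℝ) {x : Fin n → ℝ} (hx : x ∉ shadow Qc) :
    ∑' L : Qc, Set.indicator (Cube.toSet (L : Cube n)) (ψ L) x = 0 := by
  have h : ∀ L : Qc, Set.indicator (Cube.toSet (L : Cube n)) (ψ L) x = 0 := fun L =>
    Set.indicator_of_notMem (fun hxL => hx (mem_shadow_iff.2 ⟨L, L.2, hxL⟩)) _
  calc ∑' L : Qc, Set.indicator (Cube.toSet (L : Cube n)) (ψ L) x
      = ∑' _ : Qc, (0 : ℝ) := tsum_congr h
    _ = 0 := tsum_zero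

lemma avg_cutoff_bound {q lam : ℝ} (hq : 1 ≤ q) (hlam : 1 < lam)
    {Qc : Set (Cube n)} {f : (Fin n → ℝ) → ℝ} (hY : Ynorm Qc q f ≤ 1)
    {L : Cube n} (hL : L ∈ Qc) :
    |(volume L.toSet).toReal⁻¹ * ∫ z in L.toSet, (if lam < |f z| then f z else 0)| ≤
      32 ^ n * 2 ^ q * lam ^ (1 - q) := by
  have hq0 : (0 : ℝ) < q := by linarith
  have hlam0 : (0 : ℝ) < lam := by linarith
  have hs0 : (0 : ℝ) < L.side := L.side_pos
  obtain ⟨x₁, hx₁, hM⟩ := exists_good_point hY hL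
  have hsub : L.toSet ⊆ (L.dilate 32 (by norm_num)).toSet :=
    subset_dilate L (by norm_num) (by norm_num)
  have hside : (L.dilate 32 (by norm_num)).side = 32 * L.side := rfl
  have I2 : ∫⁻ x in L.toSet, (‖f x‖₊ : ℝ≥0∞) ^ q ≤
      ∫⁻ x in (L.dilate 32 (by norm_num)).toSet, (‖f x‖₊ : ℝ≥0∞) ^ q :=
    lintegral_mono_set hsub
  have I3 := lint_le_of_maxFn_lt hq0 hM hx₁
  have I1 : ∫⁻ z in L.toSet, ENNReal.ofReal ‖if lam < |f z| then f z else 0‖ ≤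
      ENNReal.ofReal (lam ^ (1 - q)) * ∫⁻ x in L.toSet, (‖f x‖₊ : ℝ≥0∞) ^ q := by
    rw [← lintegral_const_mul' _ _ ENNReal.ofReal_ne_top]
    refine lintegral_mono fun z => ?_
    rw [ofReal_norm, enorm_eq_nnnorm]
    exact cutoff_enorm_le hq hlam (f z)
  have Itot : ∫⁻ z in L.toSet, ENNReal.ofReal ‖if lam < |f z| then f z else 0‖ ≤
      ENNReal.ofReal (lam ^ (1 - q) * ((32 * L.side) ^ n * 2 ^ q)) := by
    refine I1.trans ?_
    calc ENNReal.ofReal (lam ^ (1 - q)) * ∫⁻ x in L.toSet, (‖f x‖₊ : ℝ≥0∞) ^ q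
        ≤ ENNReal.ofReal (lam ^ (1 - q)) *
            (volume (L.dilate 32 (by norm_num)).toSet * 2 ^ q) := by
          gcongr
          exact I2.trans I3
      _ = ENNReal.ofReal (lam ^ (1 - q) * ((32 * L.side) ^ n * 2 ^ q)) := by
          rw [cube_volume, hside, two_rpow_eq q, ← ENNReal.ofReal_mul (by positivity),
            ← ENNReal.ofReal_mul (by positivity)]
  have hnorm : |∫ z in L.toSet, (if lam < |f z| then f z else 0)| ≤
      lam ^ (1 - q) * ((32 * L.side) ^ n * 2 ^ q) := by
    have h1 : |∫ z in L.toSet, (if lam < |f z| then f z else 0)| ≤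
        (∫⁻ z in L.toSet, ENNReal.ofReal ‖if lam < |f z| then f z else 0‖).toReal := by
      simpa [Real.norm_eq_abs] using
        norm_integral_le_lintegral_norm (μ := volume.restrict L.toSet)
          (fun z => if lam < |f z| then f z else 0)
    refine h1.trans ?_
    have h2 := ENNReal.toReal_mono ENNReal.ofReal_ne_top Itot
    rwa [ENNReal.toReal_ofReal (by positivity)] at h2
  have hvol : (volume L.toSet).toReal = L.side ^ n := by
    rw [cube_volume, ENNReal.toReal_ofReal (by positivity)]
  have hs : (0 : ℝ) < L.side ^ n := pow_pos L.side_pos n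
  rw [abs_mul, hvol, abs_of_nonneg (by positivity : (0:ℝ) ≤ (L.side ^ n)⁻¹)]
  calc (L.side ^ n)⁻¹ * |∫ z in L.toSet, (if lam < |f z| then f z else 0)|
      ≤ (L.side ^ n)⁻¹ * (lam ^ (1 - q) * ((32 * L.side) ^ n * 2 ^ q)) :=
        mul_le_mul_of_nonneg_left hnorm (by positivity)
    _ = 32 ^ n * 2 ^ q * lam ^ (1 - q) := by
        rw [mul_pow]
        field_simp

end CZAux2

/-- Calderón–Zygmund splitting in the localized spaces: if `f ∈ Ẋ_q(𝒬)` with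
`‖f‖_{Ẋ_q} ≤ 1` and `b = ∑_L (f_{>λ} - ⨍_L f_{>λ}) 1_L`, `g = f - b`, then
`‖b‖_{Ẋ₁} ≲ λ^{1-q}` and `‖g‖_{𝒴_p} ≲ λ^{1-q/p}`. -/
theorem cz_splitting_Xdot
    (n : ℕ) (hn : 1 ≤ n) (q p : ℝ) (hq : 1 ≤ q) (hqp : q ≤ p) :
    ∃ C : ℝ, 0 < C ∧
      ∀ (D : Set (Cube n)) (Qtop : Cube n) (Qc : Set (Cube n)),
        IsDyadicLattice D → IsStoppingCollection D Qtop Qc →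
      ∀ lam : ℝ, 1 < lam →
      ∀ f : (Fin n → ℝ) → ℝ, MemXdot Qc Qtop q f → Ynorm Qc q f ≤ 1 →
      ∀ b g : (Fin n → ℝ) → ℝ,
        (b = fun x => ∑' L : Qc,
          Set.indicator (Cube.toSet (L : Cube n))
            (fun y => (if lam < |f y| then f y else 0) -
              (volume (Cube.toSet (L : Cube n))).toReal⁻¹ *
                ∫ z in Cube.toSet (L : Cube n), (if lam < |f z| then f z else 0)) x) →
        (g = fun x => f x - b x) →
        Ynorm Qc 1 b ≤ ENNReal.ofReal (C * lam ^ (1 - q)) ∧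
          Ynorm Qc p g ≤ ENNReal.ofReal (C * lam ^ (1 - q / p)) := by
  classical
  have hq0 : (0:ℝ) < q := by linarith
  have hp1 : (1:ℝ) ≤ p := hq.trans hqp
  have hp0 : (0:ℝ) < p := by linarith
  set B' : ℝ := 32 ^ n * 2 ^ q with hB'def
  have hB'0 : 0 < B' := by rw [hB'def]; positivity
  set K : ℝ := 1 + B' with hKdef
  have hK0 : 0 < K := by rw [hKdef]; linarith
  set A : ℝ := 2 ^ q * (2 ^ q + B' ^ q) with hAdef
  have hA0 : 0 < A := by
    rw [hAdef]
    have h1 : (0:ℝ) < (2:ℝ) ^ q := Real.rpow_pos_of_pos (by norm_num) q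
    have h2 : (0:ℝ) < B' ^ q := Real.rpow_pos_of_pos hB'0 q
    positivity
  set C₁ : ℝ := 2 ^ q + B' with hC₁def
  have hC₁0 : 0 < C₁ := by
    rw [hC₁def]
    have h1 : (0:ℝ) < (2:ℝ) ^ q := Real.rpow_pos_of_pos (by norm_num) q
    linarith
  set C₂ : ℝ := K ^ ((p - q)/p) * A ^ (1/p) with hC₂def
  have hC₂0 : 0 < C₂ := by
    rw [hC₂def]
    exact mul_pos (Real.rpow_pos_of_pos hK0 _) (Real.rpow_pos_of_pos hA0 _)
  refine ⟨C₁ + C₂ + 1, by linarith, ?_⟩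
  intro D Qtop Qc hD hS lam hlam f hf hY b g hb hg
  have hlam0 : (0:ℝ) < lam := by linarith
  have hdisj := hS.2.2.1
  have hlamle : lam ^ (1 - q) ≤ 1 :=
    Real.rpow_le_one_of_one_le_of_nonpos hlam.le (by linarith)
  have hlampos : 0 < lam ^ (1 - q) := Real.rpow_pos_of_pos hlam0 _
  set B : ℝ := B' * lam ^ (1 - q) with hBdef
  have hB0 : 0 < B := mul_pos hB'0 hlampos
  have hBleB' : B ≤ B' := by rw [hBdef]; nlinarith
  have havg : ∀ L ∈ Qc,
      |(volume (Cube.toSet L)).toReal⁻¹ *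
        ∫ z in Cube.toSet L, (if lam < |f z| then f z else 0)| ≤ B := by
    intro L hL
    calc |(volume (Cube.toSet L)).toReal⁻¹ *
        ∫ z in Cube.toSet L, (if lam < |f z| then f z else 0)|
        ≤ 32 ^ n * 2 ^ q * lam ^ (1 - q) := avg_cutoff_bound hq hlam hY hL
      _ = B := by rw [hBdef, hB'def]
  have hbmem : ∀ L₀, L₀ ∈ Qc → ∀ x ∈ Cube.toSet L₀, b x =
      (if lam < |f x| then f x else 0) -
        (volume (Cube.toSet L₀)).toReal⁻¹ *
          ∫ z in Cube.toSet L₀, (if lam < |f z| then f z else 0) := by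
    intro L₀ h₀ x hx
    rw [congrFun hb x]
    exact tsum_indicator_of_mem hdisj (fun (L : Qc) y =>
      (if lam < |f y| then f y else 0) -
        (volume (Cube.toSet (L : Cube n))).toReal⁻¹ *
          ∫ z in Cube.toSet (L : Cube n), (if lam < |f z| then f z else 0)) h₀ hx
  have hb0 : ∀ x, x ∉ shadow Qc → b x = 0 := by
    intro x hx
    rw [congrFun hb x]
    exact tsum_indicator_of_not_mem _ hx
  have hgx : ∀ x, g x = f x - b x := fun x => congrFun hg x
  have hbptw : ∀ x, (‖b x‖₊ : ℝ≥0∞) ≤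
      ENNReal.ofReal (lam ^ (1-q)) * (‖f x‖₊:ℝ≥0∞)^q + ENNReal.ofReal B := by
    intro x
    by_cases hx : x ∈ shadow Qc
    · obtain ⟨L₀, h₀, hxL⟩ := mem_shadow_iff.1 hx
      refine le_trans ?_ (add_le_add_left (cutoff_enorm_le hq hlam (f x)) _)
      rw [← enorm_eq_nnnorm, ← ofReal_norm, ← enorm_eq_nnnorm, ← ofReal_norm,
        ← ENNReal.ofReal_add (norm_nonneg _) hB0.le]
      refine ENNReal.ofReal_le_ofReal ?_
      rw [hbmem L₀ h₀ x hxL]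
      simp only [Real.norm_eq_abs]
      have h2 := havg L₀ h₀
      calc |(if lam < |f x| then f x else 0) -
            (volume (Cube.toSet L₀)).toReal⁻¹ *
              ∫ z in Cube.toSet L₀, (if lam < |f z| then f z else 0)|
          ≤ |if lam < |f x| then f x else 0| +
            |(volume (Cube.toSet L₀)).toReal⁻¹ *
              ∫ z in Cube.toSet L₀, (if lam < |f z| then f z else 0)| := abs_sub _ _
        _ ≤ |if lam < |f x| then f x else 0| + B := by linarith
    · rw [hb0 x hx]
      simp only [nnnorm_zero, ENNReal.coe_zero]
      exact zero_le
  -- ============ bound for b ============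
  constructor
  · simp only [Ynorm]
    refine max_le ?_ ?_
    · have hbind : Set.indicator (shadow Qc)ᶜ b = fun _ => (0:ℝ) := by
        funext x
        by_cases hx : x ∈ shadow Qc
        · exact Set.indicator_of_notMem (by simpa using hx) _
        · rw [Set.indicator_of_mem (by simpa using hx) b]
          exact hb0 x hx
      rw [hbind, eLpNorm_zero']
      exact zero_le
    · refine iSup₂_le fun L hL => ?_
      obtain ⟨x₀, hx₀, hM⟩ := exists_good_point hY hL
      refine (iInf₂_le x₀ hx₀).trans ?_
      simp only [maxFn]
      refine iSup₂_le fun Q hxQ => ?_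
      have hca : cubeAvg 1 Q.toSet b =
          (volume Q.toSet)⁻¹ * ∫⁻ x in Q.toSet, (‖b x‖₊:ℝ≥0∞) ^ (1:ℝ) := by
        rw [cubeAvg]
        norm_num
      rw [hca]
      have hint : ∫⁻ x in Q.toSet, (‖b x‖₊:ℝ≥0∞) ^ (1:ℝ) ≤
          ENNReal.ofReal (lam^(1-q)) * (volume Q.toSet * 2^q) +
            ENNReal.ofReal B * volume Q.toSet := by
        calc ∫⁻ x in Q.toSet, (‖b x‖₊:ℝ≥0∞) ^ (1:ℝ)
            ≤ ∫⁻ x in Q.toSet,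
                (ENNReal.ofReal (lam^(1-q)) * (‖f x‖₊:ℝ≥0∞)^q + ENNReal.ofReal B) := by
              refine lintegral_mono fun x => ?_
              rw [ENNReal.rpow_one]
              exact hbptw x
          _ = ENNReal.ofReal (lam^(1-q)) * (∫⁻ x in Q.toSet, (‖f x‖₊:ℝ≥0∞)^q) +
              ENNReal.ofReal B * volume Q.toSet := by
              rw [lintegral_add_right _ measurable_const,
                lintegral_const_mul' _ _ ENNReal.ofReal_ne_top, setLIntegral_const]
          _ ≤ _ := by
              gcongr
              exact lint_le_of_maxFn_lt hq0 hM hxQ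
      calc (volume Q.toSet)⁻¹ * ∫⁻ x in Q.toSet, (‖b x‖₊:ℝ≥0∞) ^ (1:ℝ)
          ≤ (volume Q.toSet)⁻¹ * (ENNReal.ofReal (lam^(1-q)) * (volume Q.toSet * 2^q) +
              ENNReal.ofReal B * volume Q.toSet) := mul_le_mul_right hint _
        _ = ((volume Q.toSet)⁻¹ * volume Q.toSet) *
            (ENNReal.ofReal (lam^(1-q)) * 2^q + ENNReal.ofReal B) := by ring
        _ ≤ 1 * (ENNReal.ofReal (lam^(1-q)) * 2^q + ENNReal.ofReal B) :=
            mul_le_mul_left (ENNReal.inv_mul_le_one _) _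
        _ = ENNReal.ofReal (lam^(1-q) * 2^q + B) := by
            rw [one_mul, two_rpow_eq q, ← ENNReal.ofReal_mul hlampos.le,
              ← ENNReal.ofReal_add (by positivity) hB0.le]
        _ ≤ ENNReal.ofReal ((C₁ + C₂ + 1) * lam^(1-q)) := by
            refine ENNReal.ofReal_le_ofReal ?_
            have heq : lam^(1-q) * 2^q + B = C₁ * lam^(1-q) := by
              rw [hBdef, hC₁def]; ring
            rw [heq]
            exact mul_le_mul_of_nonneg_right (by linarith) hlampos.le
  -- ============ bound for g ============
  · have hgf_off : ∀ x, x ∉ shadow Qc → g x = f x := by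
      intro x hx
      rw [hgx x, hb0 x hx, sub_zero]
    have hg_on : ∀ L₀, L₀ ∈ Qc → ∀ x ∈ Cube.toSet L₀, g x =
        (if lam < |f x| then 0 else f x) +
          (volume (Cube.toSet L₀)).toReal⁻¹ *
            ∫ z in Cube.toSet L₀, (if lam < |f z| then f z else 0) := by
      intro L₀ h₀ x hx
      rw [hgx x, hbmem L₀ h₀ x hx]
      split_ifs <;> ring
    have hgptw : ∀ x, (‖g x‖₊:ℝ≥0∞) ≤ (‖f x‖₊:ℝ≥0∞) + ENNReal.ofReal B' := by
      intro x
      by_cases hx : x ∈ shadow Qc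
      · obtain ⟨L₀, h₀, hxL⟩ := mem_shadow_iff.1 hx
        rw [← enorm_eq_nnnorm, ← ofReal_norm, ← enorm_eq_nnnorm, ← ofReal_norm,
          ← ENNReal.ofReal_add (norm_nonneg _) hB'0.le]
        refine ENNReal.ofReal_le_ofReal ?_
        rw [hg_on L₀ h₀ x hxL]
        simp only [Real.norm_eq_abs]
        have h1 : |if lam < |f x| then 0 else f x| ≤ |f x| := by
          split_ifs
          · simp
          · exact le_rfl
        have h2 := (havg L₀ h₀).trans hBleB'
        calc |(if lam < |f x| then 0 else f x) +
              (volume (Cube.toSet L₀)).toReal⁻¹ *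
                ∫ z in Cube.toSet L₀, (if lam < |f z| then f z else 0)|
            ≤ |if lam < |f x| then 0 else f x| +
              |(volume (Cube.toSet L₀)).toReal⁻¹ *
                ∫ z in Cube.toSet L₀, (if lam < |f z| then f z else 0)| := abs_add_le _ _
          _ ≤ |f x| + B' := add_le_add h1 h2
      · rw [hgf_off x hx]
        exact le_self_add
    have hgae : ∀ᵐ x : (Fin n → ℝ), (‖g x‖₊:ℝ≥0∞) ≤ ENNReal.ofReal (K * lam) := by
      have h1 : eLpNorm (Set.indicator (shadow Qc)ᶜ f) ⊤ volume ≤ 1 :=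
        (le_max_left _ _).trans hY
      rw [eLpNorm_exponent_top] at h1
      filter_upwards [ae_le_eLpNormEssSup (f := Set.indicator (shadow Qc)ᶜ f) (μ := volume)]
        with x hx1
      by_cases hx : x ∈ shadow Qc
      · obtain ⟨L₀, h₀, hxL⟩ := mem_shadow_iff.1 hx
        rw [← enorm_eq_nnnorm, ← ofReal_norm]
        refine ENNReal.ofReal_le_ofReal ?_
        rw [hg_on L₀ h₀ x hxL]
        simp only [Real.norm_eq_abs]
        have h1' : |if lam < |f x| then 0 else f x| ≤ lam := by
          split_ifs with h
          · simpa using hlam0.le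
          · exact not_lt.1 h
        have h2 := (havg L₀ h₀).trans hBleB'
        calc |(if lam < |f x| then 0 else f x) +
              (volume (Cube.toSet L₀)).toReal⁻¹ *
                ∫ z in Cube.toSet L₀, (if lam < |f z| then f z else 0)|
            ≤ lam + B' := (abs_add_le _ _).trans (add_le_add h1' h2)
          _ ≤ K * lam := by rw [hKdef]; nlinarith
      · have hfx : (‖f x‖₊ : ℝ≥0∞) ≤ 1 := by
          have h3 := hx1.trans h1
          rwa [Set.indicator_of_mem (by simpa using hx) f] at h3
        rw [hgf_off x hx]
        refine hfx.trans (ENNReal.one_le_ofReal.2 ?_)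
        nlinarith
    simp only [Ynorm]
    refine max_le ?_ ?_
    · have hgind : Set.indicator (shadow Qc)ᶜ g = Set.indicator (shadow Qc)ᶜ f := by
        funext x
        by_cases hx : x ∈ shadow Qc
        · rw [Set.indicator_of_notMem (by simpa using hx),
            Set.indicator_of_notMem (by simpa using hx)]
        · rw [Set.indicator_of_mem (by simpa using hx),
            Set.indicator_of_mem (by simpa using hx)]
          exact hgf_off x hx
      rw [hgind]
      refine ((le_max_left _ _).trans hY).trans (ENNReal.one_le_ofReal.2 ?_)
      have he0 : 0 ≤ 1 - q/p := by
        have := (div_le_one hp0).2 hqp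
        linarith
      have hge1 : (1:ℝ) ≤ lam ^ (1 - q/p) := by
        have := Real.rpow_le_rpow_of_exponent_le hlam.le he0
        rwa [Real.rpow_zero] at this
      nlinarith
    · refine iSup₂_le fun L hL => ?_
      obtain ⟨x₀, hx₀, hM⟩ := exists_good_point hY hL
      refine (iInf₂_le x₀ hx₀).trans ?_
      simp only [maxFn]
      refine iSup₂_le fun Q hxQ => ?_
      have hAq : ∫⁻ x in Q.toSet, (‖g x‖₊:ℝ≥0∞)^q ≤
          volume Q.toSet * ENNReal.ofReal A := by
        calc ∫⁻ x in Q.toSet, (‖g x‖₊:ℝ≥0∞)^q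
            ≤ ∫⁻ x in Q.toSet,
                (2:ℝ≥0∞)^q * ((‖f x‖₊:ℝ≥0∞)^q + (ENNReal.ofReal B')^q) := by
              refine lintegral_mono fun x => ?_
              exact (ENNReal.rpow_le_rpow (hgptw x) hq0.le).trans
                (ennreal_add_rpow_le _ _ hq0.le)
          _ = (2:ℝ≥0∞)^q * ((∫⁻ x in Q.toSet, (‖f x‖₊:ℝ≥0∞)^q) +
              (ENNReal.ofReal B')^q * volume Q.toSet) := by
              rw [lintegral_const_mul' _ _
                  (ENNReal.rpow_ne_top_of_nonneg hq0.le (by norm_num)),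
                lintegral_add_right _ measurable_const, setLIntegral_const]
          _ ≤ (2:ℝ≥0∞)^q * (volume Q.toSet * 2^q +
              (ENNReal.ofReal B')^q * volume Q.toSet) := by
              gcongr
              exact lint_le_of_maxFn_lt hq0 hM hxQ
          _ = volume Q.toSet * ((2:ℝ≥0∞)^q * ((2:ℝ≥0∞)^q + (ENNReal.ofReal B')^q)) := by
              ring
          _ = volume Q.toSet * ENNReal.ofReal A := by
              congr 1
              rw [two_rpow_eq q, ENNReal.ofReal_rpow_of_nonneg hB'0.le hq0.le,
                ← ENNReal.ofReal_add (by positivity) (by positivity),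
                ← ENNReal.ofReal_mul (by positivity), hAdef]
      have hAp : ∫⁻ x in Q.toSet, (‖g x‖₊:ℝ≥0∞)^p ≤
          ENNReal.ofReal ((K*lam)^(p-q)) * ∫⁻ x in Q.toSet, (‖g x‖₊:ℝ≥0∞)^q := by
        rw [← lintegral_const_mul' _ _ ENNReal.ofReal_ne_top]
        refine lintegral_mono_ae ?_
        filter_upwards [ae_restrict_of_ae hgae] with x hx
        by_cases h0 : (‖g x‖₊:ℝ≥0∞) = 0
        · rw [h0, ENNReal.zero_rpow_of_pos hp0]
          exact zero_le
        · have hsplit : (‖g x‖₊:ℝ≥0∞)^p = (‖g x‖₊:ℝ≥0∞)^(p-q) * (‖g x‖₊:ℝ≥0∞)^q := by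
            rw [← ENNReal.rpow_add _ _ h0 ENNReal.coe_ne_top]
            congr 1
            ring
          rw [hsplit]
          refine mul_le_mul_left ?_ _
          calc (‖g x‖₊:ℝ≥0∞)^(p-q)
              ≤ (ENNReal.ofReal (K*lam))^(p-q) := ENNReal.rpow_le_rpow hx (by linarith)
            _ = ENNReal.ofReal ((K*lam)^(p-q)) :=
                ENNReal.ofReal_rpow_of_pos (mul_pos hK0 hlam0)
      have hfin : (volume Q.toSet)⁻¹ * ∫⁻ x in Q.toSet, (‖g x‖₊:ℝ≥0∞)^p ≤
          ENNReal.ofReal ((K*lam)^(p-q) * A) := by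
        calc (volume Q.toSet)⁻¹ * ∫⁻ x in Q.toSet, (‖g x‖₊:ℝ≥0∞)^p
            ≤ (volume Q.toSet)⁻¹ * (ENNReal.ofReal ((K*lam)^(p-q)) *
                (volume Q.toSet * ENNReal.ofReal A)) :=
              mul_le_mul_right (hAp.trans (mul_le_mul_right hAq _)) _
          _ = ((volume Q.toSet)⁻¹ * volume Q.toSet) *
              (ENNReal.ofReal ((K*lam)^(p-q)) * ENNReal.ofReal A) := by ring
          _ ≤ 1 * (ENNReal.ofReal ((K*lam)^(p-q)) * ENNReal.ofReal A) :=
              mul_le_mul_left (ENNReal.inv_mul_le_one _) _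
          _ = ENNReal.ofReal ((K*lam)^(p-q) * A) := by
              rw [one_mul, ← ENNReal.ofReal_mul
                (Real.rpow_nonneg (mul_pos hK0 hlam0).le _)]
      rw [cubeAvg]
      calc ((volume Q.toSet)⁻¹ * ∫⁻ x in Q.toSet, (‖g x‖₊:ℝ≥0∞)^p)^(1/p)
          ≤ (ENNReal.ofReal ((K*lam)^(p-q) * A))^(1/p) :=
            ENNReal.rpow_le_rpow hfin (by positivity)
        _ = ENNReal.ofReal (((K*lam)^(p-q) * A)^(1/p)) :=
            ENNReal.ofReal_rpow_of_pos
              (mul_pos (Real.rpow_pos_of_pos (mul_pos hK0 hlam0) _) hA0)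
        _ = ENNReal.ofReal (C₂ * lam^(1 - q/p)) := by
            congr 1
            rw [hC₂def, Real.mul_rpow (Real.rpow_nonneg (mul_pos hK0 hlam0).le _) hA0.le,
              ← Real.rpow_mul (mul_pos hK0 hlam0).le]
            have hpq : (p - q) * (1/p) = 1 - q/p := by field_simp
            rw [hpq, Real.mul_rpow hK0.le hlam0.le]
            have hpq2 : (p-q)/p = 1 - q/p := by field_simp
            rw [hpq2]
            ring
        _ ≤ ENNReal.ofReal ((C₁ + C₂ + 1) * lam^(1 - q/p)) := by
            refine ENNReal.ofReal_le_ofReal ?_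
            exact mul_le_mul_of_nonneg_right (by linarith)
              (Real.rpow_nonneg hlam0.le _)
end
end

section
/- Let 𝒬 be a stopping collection with top Q in a dyadic lattice of ℝ^n, let 1 ≤ q ≤ p < ∞ and λ > 1. If f ∈ 𝒴_q(𝒬) with ‖f‖_{𝒴_q} ≤ 1, then ‖f·1_{|f|>λ}‖_{𝒴_1(𝒬)} ≲ λ^{1−q} and ‖f·1_{|f|≤λ}‖_{𝒴_p(𝒬)} ≲ λ^{1−q/p}, with implicit constants depending only on n, q, p. -/
open MeasureTheory Filter Set
open scoped ENNReal NNReal BigOperators FourierTransform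

noncomputable section

namespace TruncAux

lemma pw1 {lam q : ℝ} (hlam : 1 < lam) (hq : 1 ≤ q) (r : ℝ) :
    (‖(if lam < |r| then r else 0)‖₊ : ℝ≥0∞) ≤
      ENNReal.ofReal (lam ^ (1 - q)) * (‖r‖₊ : ℝ≥0∞) ^ q := by
  have hlam0 : (0:ℝ) < lam := lt_trans one_pos hlam
  split_ifs with h
  · have hla : ENNReal.ofReal lam ≤ (‖r‖₊ : ℝ≥0∞) := by
      rw [← enorm_eq_nnnorm, Real.enorm_eq_ofReal_abs]; exact ENNReal.ofReal_le_ofReal h.le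
    set a : ℝ≥0∞ := (‖r‖₊ : ℝ≥0∞) with ha
    have ha0 : a ≠ 0 := by
      intro h0
      rw [h0, le_zero_iff, ENNReal.ofReal_eq_zero] at hla
      linarith
    have hat : a ≠ ⊤ := ENNReal.coe_ne_top
    have key : a ^ (1 - q) ≤ ENNReal.ofReal (lam ^ (1 - q)) := by
      rw [← ENNReal.ofReal_rpow_of_pos hlam0,
        show (1 - q) = -(q - 1) by ring, ENNReal.rpow_neg, ENNReal.rpow_neg]
      exact ENNReal.inv_le_inv.mpr (ENNReal.rpow_le_rpow hla (by linarith))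
    calc a = a ^ (1 - q) * a ^ q := by
            rw [← ENNReal.rpow_add _ _ ha0 hat]; norm_num
      _ ≤ _ := mul_le_mul_left key _
  · simp

lemma pw2 {lam q p : ℝ} (hlam : 1 < lam) (hq : 1 ≤ q) (hqp : q ≤ p) (r : ℝ) :
    (‖(if |r| ≤ lam then r else 0)‖₊ : ℝ≥0∞) ^ p ≤
      ENNReal.ofReal (lam ^ (p - q)) * (‖r‖₊ : ℝ≥0∞) ^ q := by
  have hlam0 : (0:ℝ) < lam := lt_trans one_pos hlam
  split_ifs with h
  · set a : ℝ≥0∞ := (‖r‖₊ : ℝ≥0∞) with ha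
    have hal : a ≤ ENNReal.ofReal lam := by
      rw [ha, ← enorm_eq_nnnorm, Real.enorm_eq_ofReal_abs]; exact ENNReal.ofReal_le_ofReal h
    by_cases ha0 : a = 0
    · rw [ha0, ENNReal.zero_rpow_of_pos (by linarith), ENNReal.zero_rpow_of_pos (by linarith)]
      simp
    · have hat : a ≠ ⊤ := ENNReal.coe_ne_top
      have key : a ^ (p - q) ≤ ENNReal.ofReal (lam ^ (p - q)) := by
        rw [← ENNReal.ofReal_rpow_of_pos hlam0]
        exact ENNReal.rpow_le_rpow hal (by linarith)
      calc a ^ p = a ^ (p - q) * a ^ q := by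
              rw [← ENNReal.rpow_add _ _ ha0 hat, sub_add_cancel]
        _ ≤ _ := mul_le_mul_left key _
  · rw [nnnorm_zero, ENNReal.coe_zero, ENNReal.zero_rpow_of_pos (by linarith)]
    exact zero_le

lemma avg1 {n : ℕ} {lam q : ℝ} (hlam : 1 < lam) (hq : 1 ≤ q)
    (f : (Fin n → ℝ) → ℝ) (S : Set (Fin n → ℝ)) :
    cubeAvg 1 S (fun x => if lam < |f x| then f x else 0) ≤
      ENNReal.ofReal (lam ^ (1 - q)) * (cubeAvg q S f) ^ q := by
  have hq0 : q ≠ 0 := by intro h; rw [h] at hq; linarith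
  unfold cubeAvg
  rw [← ENNReal.rpow_mul, show (1:ℝ)/q * q = 1 by field_simp,
    show (1:ℝ)/1 = 1 by norm_num]
  simp only [ENNReal.rpow_one]
  have h1 : ∫⁻ x in S, (‖(if lam < |f x| then f x else 0)‖₊ : ℝ≥0∞) ≤
      ENNReal.ofReal (lam ^ (1 - q)) * ∫⁻ x in S, (‖f x‖₊ : ℝ≥0∞) ^ q := by
    rw [← lintegral_const_mul' _ _ ENNReal.ofReal_ne_top]
    exact lintegral_mono fun x => pw1 hlam hq (f x)
  calc (volume S)⁻¹ * ∫⁻ x in S, (‖(if lam < |f x| then f x else 0)‖₊ : ℝ≥0∞)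
      ≤ (volume S)⁻¹ * (ENNReal.ofReal (lam ^ (1 - q)) * ∫⁻ x in S, (‖f x‖₊ : ℝ≥0∞) ^ q) :=
        mul_le_mul_right h1 _
    _ = ENNReal.ofReal (lam ^ (1 - q)) * ((volume S)⁻¹ * ∫⁻ x in S, (‖f x‖₊ : ℝ≥0∞) ^ q) := by
        ring

lemma avg2 {n : ℕ} {lam q p : ℝ} (hlam : 1 < lam) (hq : 1 ≤ q) (hqp : q ≤ p)
    (f : (Fin n → ℝ) → ℝ) (S : Set (Fin n → ℝ)) :
    cubeAvg p S (fun x => if |f x| ≤ lam then f x else 0) ≤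
      ENNReal.ofReal (lam ^ (1 - q / p)) * (cubeAvg q S f) ^ (q / p) := by
  have hlam0 : (0:ℝ) < lam := lt_trans one_pos hlam
  have hq0 : (0:ℝ) < q := lt_of_lt_of_le one_pos hq
  have hp0 : (0:ℝ) < p := lt_of_lt_of_le hq0 hqp
  unfold cubeAvg
  rw [← ENNReal.rpow_mul]
  rw [show 1 / q * (q / p) = 1 / p by field_simp]
  have h1 : ∫⁻ x in S, (‖(if |f x| ≤ lam then f x else 0)‖₊ : ℝ≥0∞) ^ p ≤
      ENNReal.ofReal (lam ^ (p - q)) * ∫⁻ x in S, (‖f x‖₊ : ℝ≥0∞) ^ q := by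
    rw [← lintegral_const_mul' _ _ ENNReal.ofReal_ne_top]
    exact lintegral_mono fun x => pw2 hlam hq hqp (f x)
  have h2 : (volume S)⁻¹ * ∫⁻ x in S, (‖(if |f x| ≤ lam then f x else 0)‖₊ : ℝ≥0∞) ^ p ≤
      ENNReal.ofReal (lam ^ (p - q)) * ((volume S)⁻¹ * ∫⁻ x in S, (‖f x‖₊ : ℝ≥0∞) ^ q) := by
    calc (volume S)⁻¹ * ∫⁻ x in S, (‖(if |f x| ≤ lam then f x else 0)‖₊ : ℝ≥0∞) ^ p
        ≤ (volume S)⁻¹ * (ENNReal.ofReal (lam ^ (p - q)) *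
            ∫⁻ x in S, (‖f x‖₊ : ℝ≥0∞) ^ q) := mul_le_mul_right h1 _
      _ = _ := by ring
  refine le_trans (ENNReal.rpow_le_rpow h2 (by positivity)) ?_
  rw [ENNReal.mul_rpow_of_nonneg _ _ (by positivity),
    ENNReal.ofReal_rpow_of_pos (Real.rpow_pos_of_pos hlam0 _)]
  rw [show ENNReal.ofReal ((lam ^ (p - q)) ^ (1/p)) = ENNReal.ofReal (lam ^ (1 - q/p)) by
    rw [← Real.rpow_mul hlam0.le, show (p - q) * (1/p) = 1 - q/p by field_simp]]

lemma max1 {n : ℕ} {lam q : ℝ} (hlam : 1 < lam) (hq : 1 ≤ q)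
    (f : (Fin n → ℝ) → ℝ) (x : Fin n → ℝ) :
    maxFn 1 (fun y => if lam < |f y| then f y else 0) x ≤
      ENNReal.ofReal (lam ^ (1 - q)) * (maxFn q f x) ^ q := by
  refine iSup₂_le fun Q hx => ?_
  refine le_trans (avg1 hlam hq f Q.toSet) (mul_le_mul_right ?_ _)
  exact ENNReal.rpow_le_rpow (le_iSup₂ (f := fun Q (_ : x ∈ Cube.toSet Q) =>
    cubeAvg q Q.toSet f) Q hx) (by linarith)

lemma max2 {n : ℕ} {lam q p : ℝ} (hlam : 1 < lam) (hq : 1 ≤ q) (hqp : q ≤ p)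
    (f : (Fin n → ℝ) → ℝ) (x : Fin n → ℝ) :
    maxFn p (fun y => if |f y| ≤ lam then f y else 0) x ≤
      ENNReal.ofReal (lam ^ (1 - q / p)) * (maxFn q f x) ^ (q / p) := by
  have hq0 : (0:ℝ) < q := lt_of_lt_of_le one_pos hq
  have hp0 : (0:ℝ) < p := lt_of_lt_of_le hq0 hqp
  refine iSup₂_le fun Q hx => ?_
  refine le_trans (avg2 hlam hq hqp f Q.toSet) (mul_le_mul_right ?_ _)
  exact ENNReal.rpow_le_rpow (le_iSup₂ (f := fun Q (_ : x ∈ Cube.toSet Q) =>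
    cubeAvg q Q.toSet f) Q hx) (by positivity)

end TruncAux

/-- Truncation estimates in the localized spaces: if `f ∈ 𝒴_q(𝒬)` with `‖f‖_{𝒴_q} ≤ 1`,
then `‖f·1_{|f|>λ}‖_{𝒴₁} ≲ λ^{1-q}` and `‖f·1_{|f|≤λ}‖_{𝒴_p} ≲ λ^{1-q/p}`. -/
theorem truncation_Ynorm_estimates
    (n : ℕ) (hn : 1 ≤ n) (q p : ℝ) (hq : 1 ≤ q) (hqp : q ≤ p) :
    ∃ C : ℝ, 0 < C ∧
      ∀ (D : Set (Cube n)) (Qtop : Cube n) (Qc : Set (Cube n)),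
        IsDyadicLattice D → IsStoppingCollection D Qtop Qc →
      ∀ lam : ℝ, 1 < lam →
      ∀ f : (Fin n → ℝ) → ℝ, MemY Qc Qtop q f → Ynorm Qc q f ≤ 1 →
        Ynorm Qc 1 (fun x => if lam < |f x| then f x else 0) ≤
            ENNReal.ofReal (C * lam ^ (1 - q)) ∧
          Ynorm Qc p (fun x => if |f x| ≤ lam then f x else 0) ≤
            ENNReal.ofReal (C * lam ^ (1 - q / p)) := by
  have hq0 : (0:ℝ) < q := lt_of_lt_of_le one_pos hq
  have hp0 : (0:ℝ) < p := lt_of_lt_of_le hq0 hqp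
  refine ⟨2 ^ q, Real.rpow_pos_of_pos two_pos q, ?_⟩
  intro D Qtop Qc hD hSC lam hlam f hf hY
  have hlam0 : (0:ℝ) < lam := lt_trans one_pos hlam
  rw [Ynorm, max_le_iff] at hY
  obtain ⟨hA, hB⟩ := hY
  have two_rpow : ((2:ℝ≥0∞)) ^ q = ENNReal.ofReal (2 ^ q) := by
    rw [show ((2:ℝ≥0∞)) = ENNReal.ofReal 2 by norm_num,
      ENNReal.ofReal_rpow_of_pos two_pos]
  constructor
  · -- first estimate
    rw [Ynorm]
    apply max_le
    · -- outside the shadow the truncation vanishes a.e.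
      have h0 : (Set.indicator (shadow Qc)ᶜ fun x => if lam < |f x| then f x else 0)
          =ᵐ[volume] (0 : (Fin n → ℝ) → ℝ) := by
        have hA' : eLpNormEssSup (Set.indicator (shadow Qc)ᶜ f) volume ≤ 1 := by
          rwa [eLpNorm_exponent_top] at hA
        filter_upwards [MeasureTheory.ae_le_eLpNormEssSup
          (f := Set.indicator (shadow Qc)ᶜ f) (μ := volume)] with x hx
        by_cases hin : x ∈ (shadow Qc)ᶜ
        · rw [Set.indicator_of_mem hin] at hx ⊢
          have h1 : (‖f x‖₊ : ℝ≥0∞) ≤ 1 := le_trans hx hA'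
          have hf1 : |f x| ≤ 1 := by
            rwa [← enorm_eq_nnnorm, Real.enorm_eq_ofReal_abs, ENNReal.ofReal_le_one] at h1
          have : ¬ lam < |f x| := by push_neg; linarith
          simp [this]
        · rw [Set.indicator_of_notMem hin]; rfl
      rw [eLpNorm_congr_ae h0, eLpNorm_zero]
      exact zero_le
    · refine iSup₂_le fun L hL => ?_
      have hBL : (⨅ x ∈ (L.dilate 32 (by norm_num)).toSet, maxFn q f x) ≤ 1 :=
        le_trans (le_iSup₂ (f := fun L (_ : L ∈ Qc) =>
          ⨅ x ∈ (L.dilate 32 (by norm_num)).toSet, maxFn q f x) L hL) hB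
      have hlt : (⨅ x ∈ (L.dilate 32 (by norm_num)).toSet, maxFn q f x) < 2 :=
        lt_of_le_of_lt hBL (by norm_num)
      obtain ⟨x₀, hx₀⟩ := iInf_lt_iff.mp hlt
      obtain ⟨hx₀mem, hx₀lt⟩ := iInf_lt_iff.mp hx₀
      refine le_trans (iInf₂_le x₀ hx₀mem) ?_
      refine le_trans (TruncAux.max1 hlam hq f x₀) ?_
      calc ENNReal.ofReal (lam ^ (1 - q)) * (maxFn q f x₀) ^ q
          ≤ ENNReal.ofReal (lam ^ (1 - q)) * (2:ℝ≥0∞) ^ q :=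
            mul_le_mul_right (ENNReal.rpow_le_rpow hx₀lt.le hq0.le) _
        _ = ENNReal.ofReal (2 ^ q * lam ^ (1 - q)) := by
            rw [two_rpow, ← ENNReal.ofReal_mul (by positivity), mul_comm]
  · -- second estimate
    rw [Ynorm]
    apply max_le
    · have hmono : ∀ x, ‖Set.indicator (shadow Qc)ᶜ
          (fun x => if |f x| ≤ lam then f x else 0) x‖ ≤
          ‖Set.indicator (shadow Qc)ᶜ f x‖ := by
        intro x
        by_cases hin : x ∈ (shadow Qc)ᶜ
        · rw [Set.indicator_of_mem hin, Set.indicator_of_mem hin]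
          split_ifs with h
          · exact le_rfl
          · simp
        · rw [Set.indicator_of_notMem hin, Set.indicator_of_notMem hin]
      have h1 : eLpNorm (Set.indicator (shadow Qc)ᶜ
          fun x => if |f x| ≤ lam then f x else 0) ⊤ volume ≤ 1 :=
        le_trans (eLpNorm_mono fun x => hmono x) hA
      refine le_trans h1 ?_
      rw [ENNReal.one_le_ofReal]
      have h2q : (1:ℝ) ≤ 2 ^ q := Real.one_le_rpow one_le_two hq0.le
      have hqp1 : q / p ≤ 1 := (div_le_one hp0).mpr hqp
      have hlq : (1:ℝ) ≤ lam ^ (1 - q/p) := Real.one_le_rpow hlam.le (by linarith)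
      nlinarith
    · refine iSup₂_le fun L hL => ?_
      have hBL : (⨅ x ∈ (L.dilate 32 (by norm_num)).toSet, maxFn q f x) ≤ 1 :=
        le_trans (le_iSup₂ (f := fun L (_ : L ∈ Qc) =>
          ⨅ x ∈ (L.dilate 32 (by norm_num)).toSet, maxFn q f x) L hL) hB
      have hlt : (⨅ x ∈ (L.dilate 32 (by norm_num)).toSet, maxFn q f x) < 2 :=
        lt_of_le_of_lt hBL (by norm_num)
      obtain ⟨x₀, hx₀⟩ := iInf_lt_iff.mp hlt
      obtain ⟨hx₀mem, hx₀lt⟩ := iInf_lt_iff.mp hx₀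
      refine le_trans (iInf₂_le x₀ hx₀mem) ?_
      refine le_trans (TruncAux.max2 hlam hq hqp f x₀) ?_
      calc ENNReal.ofReal (lam ^ (1 - q/p)) * (maxFn q f x₀) ^ (q/p)
          ≤ ENNReal.ofReal (lam ^ (1 - q/p)) * (2:ℝ≥0∞) ^ (q/p) :=
            mul_le_mul_right (ENNReal.rpow_le_rpow hx₀lt.le (by positivity)) _
        _ ≤ ENNReal.ofReal (lam ^ (1 - q/p)) * (2:ℝ≥0∞) ^ q :=
            mul_le_mul_right (ENNReal.rpow_le_rpow_of_exponent_le one_le_two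
              (div_le_self hq0.le (by linarith))) _
        _ = ENNReal.ofReal (2 ^ q * lam ^ (1 - q/p)) := by
            rw [two_rpow, ← ENNReal.ofReal_mul (by positivity), mul_comm]
end
end
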